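/- For every real α > 1 and every integer n ≥ 2, the minimum cost of a feasible demand assignment on the star T(α) equals 1 (achieved by assigning the demand of all vertices to a single multiplicity of the center). Consequently, since the LP relaxation without the constraints d(v)x(u) ≥ f(v,u) has a feasible solution of value 1/α on T(α), the integrality gap of that linear program on T(α) is at least α. -/

import Mathlib

open Finset

variable {V : Type*} [Fintype V] [DecidableEq V]

/-- The closed neighborhood `N[v]` of a vertex. -/
def closedNbhd (G : SimpleGraph V) [DecidableRel G.Adj] (v : V) : Finset V :=
  insert v (G.neighborFinset v)

/-- A demand assignment: nonnegative, supported on closed neighborhoods. -/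
def IsAssignment (G : SimpleGraph V) [DecidableRel G.Adj] (f : V → V → ℝ) : Prop :=
  (∀ u v, 0 ≤ f u v) ∧ ∀ u v, v ∉ closedNbhd G u → f u v = 0

/-- Feasibility: the demand of every vertex is fully assigned. -/
def Feasible (G : SimpleGraph V) [DecidableRel G.Adj] (d : V → ℝ) (f : V → V → ℝ) : Prop :=
  IsAssignment G f ∧ ∀ u, d u ≤ ∑ v ∈ closedNbhd G u, f u v

/-- Multiplicity `x_f(v) = ⌈(Σ_{u∈N[v]} f(u,v))/c(v)⌉`. -/
noncomputable def mult (G : SimpleGraph V) [DecidableRel G.Adj] (c : V → ℝ)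
    (f : V → V → ℝ) (v : V) : ℤ :=
  ⌈(∑ u ∈ closedNbhd G v, f u v) / c v⌉

/-- Cost of a demand assignment. -/
noncomputable def cost (G : SimpleGraph V) [DecidableRel G.Adj] (w c : V → ℝ)
    (f : V → V → ℝ) : ℝ :=
  ∑ v, w v * (mult G c f v : ℝ)

/-- Optimal cost of a feasible demand assignment. -/
noncomputable def OPT (G : SimpleGraph V) [DecidableRel G.Adj] (w c d : V → ℝ) : ℝ :=
  sInf {r | ∃ f, Feasible G d f ∧ cost G w c f = r}

/-- Feasibility for the LP relaxation of capacitated domination. -/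
def LPFeasible (G : SimpleGraph V) [DecidableRel G.Adj] (c d : V → ℝ)
    (x : V → ℝ) (f : V → V → ℝ) : Prop :=
  (∀ u, 0 ≤ x u) ∧ IsAssignment G f ∧
  (∀ u, d u ≤ ∑ v ∈ closedNbhd G u, f u v) ∧
  (∀ u, ∑ v ∈ closedNbhd G u, f v u ≤ c u * x u) ∧
  (∀ u, ∀ v ∈ closedNbhd G u, f v u ≤ d v * x u)

/-- Optimal value `OPT_f(G)` of the LP relaxation. -/
noncomputable def OPTf (G : SimpleGraph V) [DecidableRel G.Adj] (w c d : V → ℝ) : ℝ :=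
  sInf {r | ∃ x f, LPFeasible G c d x f ∧ ∑ u, w u * x u = r}

/-- The `n`-vertex star with center `ctr`. -/
def starGraph (n : ℕ) (ctr : Fin n) : SimpleGraph (Fin n) where
  Adj u v := u ≠ v ∧ (u = ctr ∨ v = ctr)
  symm := ⟨fun u v h => ⟨h.1.symm, h.2.symm⟩⟩
  loopless := ⟨fun u h => h.1 rfl⟩

instance (n : ℕ) (ctr : Fin n) : DecidableRel (starGraph n ctr).Adj :=
  fun u v => inferInstanceAs (Decidable (u ≠ v ∧ (u = ctr ∨ v = ctr)))

/-- Feasibility for the LP relaxation of capacitated domination WITHOUT the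
constraints `d(v)x(u) ≥ f(v,u)`. -/
def RelaxedLPFeasible {V : Type*} [Fintype V] [DecidableEq V]
    (G : SimpleGraph V) [DecidableRel G.Adj] (c d : V → ℝ)
    (x : V → ℝ) (f : V → V → ℝ) : Prop :=
  (∀ u, 0 ≤ x u) ∧ IsAssignment G f ∧
  (∀ u, d u ≤ ∑ v ∈ closedNbhd G u, f u v) ∧
  (∀ u, ∑ v ∈ closedNbhd G u, f v u ≤ c u * x u)

lemma mem_closedNbhd_self (G : SimpleGraph V) [DecidableRel G.Adj] (u : V) :
    u ∈ closedNbhd G u := Finset.mem_insert_self _ _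

lemma mem_closedNbhd_comm (G : SimpleGraph V) [DecidableRel G.Adj] {u v : V} :
    v ∈ closedNbhd G u ↔ u ∈ closedNbhd G v := by
  simp [closedNbhd, SimpleGraph.mem_neighborFinset, G.adj_comm, eq_comm]

lemma sum_in_closedNbhd_eq (G : SimpleGraph V) [DecidableRel G.Adj] {f : V → V → ℝ}
    (hf : IsAssignment G f) (v : V) :
    ∑ u ∈ closedNbhd G v, f u v = ∑ u, f u v :=
  Finset.sum_subset (Finset.subset_univ _)
    (fun u _ hu => hf.2 u v (fun h => hu ((mem_closedNbhd_comm G).1 h)))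

lemma sum_out_closedNbhd_eq (G : SimpleGraph V) [DecidableRel G.Adj] {f : V → V → ℝ}
    (hf : IsAssignment G f) (u : V) :
    ∑ v ∈ closedNbhd G u, f u v = ∑ v, f u v :=
  Finset.sum_subset (Finset.subset_univ _) (fun v _ hv => hf.2 u v hv)

lemma one_le_cost (G : SimpleGraph V) [DecidableRel G.Adj] (c d : V → ℝ) (f : V → V → ℝ)
    (hc : ∀ v, 0 < c v) (hd : 0 < ∑ u, d u) (hf : Feasible G d f) :
    1 ≤ cost G (fun _ => 1) c f := by
  obtain ⟨hass, hdem⟩ := hf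
  have htot : 0 < ∑ v, ∑ u ∈ closedNbhd G v, f u v := by
    refine lt_of_lt_of_le hd ?_
    calc ∑ u, d u ≤ ∑ u, ∑ v ∈ closedNbhd G u, f u v :=
          Finset.sum_le_sum fun u _ => hdem u
      _ = ∑ u, ∑ v, f u v := Finset.sum_congr rfl fun u _ => sum_out_closedNbhd_eq G hass u
      _ = ∑ v, ∑ u, f u v := Finset.sum_comm
      _ = ∑ v, ∑ u ∈ closedNbhd G v, f u v :=
          (Finset.sum_congr rfl fun v _ => (sum_in_closedNbhd_eq G hass v)).symm
  obtain ⟨v, hv⟩ : ∃ v, 0 < ∑ u ∈ closedNbhd G v, f u v := by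
    by_contra h
    push_neg at h
    exact absurd htot (not_lt.2 (Finset.sum_nonpos fun v _ => h v))
  have hm1 : (1 : ℝ) ≤ (mult G c f v : ℝ) := by
    have : 0 < mult G c f v := Int.ceil_pos.2 (div_pos hv (hc v))
    exact_mod_cast this
  have hmnn : ∀ u : V, (0 : ℝ) ≤ (mult G c f u : ℝ) := fun u => by
    have : 0 ≤ mult G c f u :=
      Int.ceil_nonneg (div_nonneg (Finset.sum_nonneg fun w _ => hass.1 w u) (hc u).le)
    exact_mod_cast this
  calc (1 : ℝ) ≤ (mult G c f v : ℝ) := hm1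
    _ ≤ ∑ u, (mult G c f u : ℝ) := Finset.single_le_sum (fun u _ => hmnn u) (Finset.mem_univ v)
    _ = cost G (fun _ => 1) c f := by simp [cost]
lemma star_ctr_mem (n : ℕ) (ctr : Fin n) (u : Fin n) :
    ctr ∈ closedNbhd (starGraph n ctr) u := by
  rcases eq_or_ne u ctr with h | h
  · subst h; exact mem_closedNbhd_self _ _
  · exact Finset.mem_insert_of_mem
      (by rw [SimpleGraph.mem_neighborFinset]; exact ⟨h, Or.inr rfl⟩)

lemma star_closedNbhd_ctr (n : ℕ) (ctr : Fin n) :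
    closedNbhd (starGraph n ctr) ctr = Finset.univ := by
  ext v
  simp only [closedNbhd, Finset.mem_insert, SimpleGraph.mem_neighborFinset,
    Finset.mem_univ, iff_true]
  rcases eq_or_ne v ctr with h | h
  · exact Or.inl h
  · exact Or.inr ⟨h.symm, Or.inl rfl⟩

lemma star_OPT (α : ℝ) (hα : 1 < α) (n : ℕ) (hn : 2 ≤ n) (ctr : Fin n) :
    OPT (starGraph n ctr) (fun _ => 1)
      (fun v => if v = ctr then (n : ℝ) else α * n) (fun _ => 1) = 1 := by
  have hn0 : (0 : ℝ) < n := by exact_mod_cast (by omega : 0 < n)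
  set G := starGraph n ctr
  set c : Fin n → ℝ := fun v => if v = ctr then (n : ℝ) else α * n with hc_def
  have hcpos : ∀ v, 0 < c v := by
    intro v
    simp only [hc_def]
    split
    · exact hn0
    · exact mul_pos (by linarith) hn0
  -- the all-to-center assignment
  set f0 : Fin n → Fin n → ℝ := fun _ v => if v = ctr then 1 else 0 with hf0_def
  have hass : IsAssignment G f0 := by
    constructor
    · intro u v; simp only [hf0_def]; split <;> norm_num
    · intro u v hv
      simp only [hf0_def]
      rw [if_neg]
      intro h; exact hv (by rw [h]; exact star_ctr_mem n ctr u)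
  have hfeas : Feasible G (fun _ => 1) f0 := by
    refine ⟨hass, fun u => ?_⟩
    rw [Finset.sum_ite_eq' (closedNbhd G u) ctr (fun _ => (1:ℝ)),
      if_pos (star_ctr_mem n ctr u)]
  have hcost : cost G (fun _ => 1) c f0 = 1 := by
    have hmctr : (mult G c f0 ctr : ℝ) = 1 := by
      have h1 : ∑ u ∈ closedNbhd G ctr, f0 u ctr = n := by
        simp [hf0_def, G, star_closedNbhd_ctr n ctr]
      have : mult G c f0 ctr = 1 := by
        rw [mult, h1]
        simp [hc_def, div_self (ne_of_gt hn0)]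
      rw [this]; norm_num
    have hmpet : ∀ v, v ≠ ctr → (mult G c f0 v : ℝ) = 0 := by
      intro v hv
      have h1 : ∑ u ∈ closedNbhd G v, f0 u v = 0 := by
        simp [hf0_def, hv]
      have : mult G c f0 v = 0 := by rw [mult, h1, zero_div, Int.ceil_zero]
      rw [this]; norm_num
    rw [cost]
    rw [Finset.sum_eq_single ctr
      (fun v _ hv => by rw [hmpet v hv]; ring) (fun h => absurd (Finset.mem_univ ctr) h)]
    rw [hmctr]; ring
  have hd : (0 : ℝ) < ∑ _u : Fin n, (1 : ℝ) := by
    simp only [Finset.sum_const, Finset.card_univ, Fintype.card_fin, nsmul_eq_mul, mul_one]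
    exact hn0
  apply le_antisymm
  · exact csInf_le ⟨1, fun r ⟨f, hf, hcr⟩ =>
      hcr ▸ one_le_cost G c (fun _ => 1) f hcpos hd hf⟩ ⟨f0, hfeas, hcost⟩
  · exact le_csInf ⟨1, f0, hfeas, hcost⟩ fun r ⟨f, hf, hcr⟩ =>
      hcr ▸ one_le_cost G c (fun _ => 1) f hcpos hd hf
lemma star_relaxed (α : ℝ) (hα : 1 < α) (n : ℕ) (hn : 2 ≤ n) (ctr p : Fin n)
    (hp : p ≠ ctr) :
    ∃ x f, RelaxedLPFeasible (starGraph n ctr)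
      (fun v => if v = ctr then (n : ℝ) else α * n) (fun _ => 1) x f ∧
      ∑ u, (1 : ℝ) * x u = 1 / α := by
  have hn0 : (0 : ℝ) < n := by exact_mod_cast (by omega : 0 < n)
  have hα0 : (0 : ℝ) < α := by linarith
  have hαn : (0 : ℝ) < α * n := mul_pos hα0 hn0
  have hαn' : α * (n : ℝ) ≠ 0 := ne_of_gt hαn
  set x : Fin n → ℝ :=
    fun u => if u = ctr then 0 else if u = p then 2 / (α * n) else 1 / (α * n) with hx_def
  set f : Fin n → Fin n → ℝ :=
    fun u v => if u = v ∧ u ≠ ctr then 1 else if u = ctr ∧ v = p then 1 else 0 with hf_def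
  have hfnn : ∀ u v, 0 ≤ f u v := by
    intro u v
    simp only [hf_def]
    split
    · norm_num
    · split <;> norm_num
  have hf_ctr0 : ∀ v, f v ctr = 0 := by
    intro v
    simp [hf_def, Ne.symm hp]
  have hf_p : ∀ v, f v p = (if v = p then (1:ℝ) else 0) + (if v = ctr then 1 else 0) := by
    intro v
    rcases eq_or_ne v ctr with h1 | h1
    · simp [hf_def, h1, Ne.symm hp]
    · rcases eq_or_ne v p with h2 | h2
      · simp [hf_def, h1, h2, hp]
      · simp [hf_def, h1, h2]
  have hf_q : ∀ q, q ≠ ctr → q ≠ p → ∀ v, f v q = if v = q then (1:ℝ) else 0 := by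
    intro q hq1 hq2 v
    rcases eq_or_ne v q with h1 | h1
    · simp [hf_def, h1, hq1]
    · simp [hf_def, h1, hq2]
  have hf_ctrp : f ctr p = 1 := by simp [hf_def, Ne.symm hp]
  have hf_uu : ∀ u, u ≠ ctr → f u u = 1 := by
    intro u hu; simp [hf_def, hu]
  refine ⟨x, f, ⟨?_, ⟨hfnn, ?_⟩, ?_, ?_⟩, ?_⟩
  · -- x nonneg
    intro u
    simp only [hx_def]
    split
    · norm_num
    · split <;> positivity
  · -- support
    intro u v hv
    have hA : ¬(u = v ∧ u ≠ ctr) := by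
      rintro ⟨h1, _⟩
      exact hv (by rw [← h1]; exact mem_closedNbhd_self (starGraph n ctr) u)
    have hB : ¬(u = ctr ∧ v = p) := by
      rintro ⟨h1, h2⟩
      refine hv ?_
      rw [h1, h2, star_closedNbhd_ctr n ctr]
      exact Finset.mem_univ p
    simp only [hf_def]
    rw [if_neg hA, if_neg hB]
  · -- demand
    intro u
    show (1 : ℝ) ≤ ∑ v ∈ closedNbhd (starGraph n ctr) u, f u v
    rcases eq_or_ne u ctr with h | h
    · have hmem : p ∈ closedNbhd (starGraph n ctr) u := by
        rw [h, star_closedNbhd_ctr n ctr]; exact Finset.mem_univ p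
      have h1 : f u p = 1 := by rw [h]; exact hf_ctrp
      calc (1:ℝ) = f u p := h1.symm
        _ ≤ ∑ v ∈ closedNbhd (starGraph n ctr) u, f u v :=
          Finset.single_le_sum (fun i _ => hfnn u i) hmem
    · calc (1:ℝ) = f u u := (hf_uu u h).symm
        _ ≤ ∑ v ∈ closedNbhd (starGraph n ctr) u, f u v :=
          Finset.single_le_sum (fun i _ => hfnn u i) (mem_closedNbhd_self (starGraph n ctr) u)
  · -- capacity
    intro u
    show ∑ v ∈ closedNbhd (starGraph n ctr) u, f v u ≤ (if u = ctr then (n:ℝ) else α * n) * x u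
    have hsub : ∑ v ∈ closedNbhd (starGraph n ctr) u, f v u ≤ ∑ v, f v u :=
      Finset.sum_le_sum_of_subset_of_nonneg (Finset.subset_univ _)
        (fun i _ _ => hfnn i u)
    rcases eq_or_ne u ctr with h | h
    · have h1 : ∑ v, f v u = 0 := by rw [h]; simp [hf_ctr0]
      have h2 : x u = 0 := by simp [hx_def, h]
      rw [if_pos h, h2, mul_zero]
      exact le_of_le_of_eq hsub h1
    · rcases eq_or_ne u p with h2 | h2
      · have h1 : ∑ v, f v u = 2 := by
          rw [h2]
          simp [hf_p, Finset.sum_add_distrib, Finset.sum_ite_eq']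
          norm_num
        have h3 : x u = 2 / (α * n) := by simp [hx_def, h2, hp]
        have h4 : (α * (n:ℝ)) * (2 / (α * n)) = 2 := by field_simp
        rw [if_neg h, h3, h4]
        exact le_of_le_of_eq hsub h1
      · have h1 : ∑ v, f v u = 1 := by
          simp [hf_q u h h2, Finset.sum_ite_eq']
        have h3 : x u = 1 / (α * n) := by simp [hx_def, h, h2]
        have h4 : (α * (n:ℝ)) * (1 / (α * n)) = 1 := by field_simp
        rw [if_neg h, h3, h4]
        exact le_of_le_of_eq hsub h1
  · -- objective value
    have hxval : ∀ u, x u = 1 / (α * n) + (if u = p then 1 / (α * n) else 0)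
        - (if u = ctr then 1 / (α * n) else 0) := by
      intro u
      simp only [hx_def]
      rcases eq_or_ne u ctr with h1 | h1
      · simp [h1, Ne.symm hp]
      · rcases eq_or_ne u p with h2 | h2
        · simp only [h1, h2, hp, if_false, if_neg hp, if_pos rfl, if_neg h1, if_true]
          field_simp
          ring
        · simp [h1, h2]
    simp only [one_mul]
    rw [Finset.sum_congr rfl (fun u _ => hxval u)]
    rw [Finset.sum_sub_distrib, Finset.sum_add_distrib, Finset.sum_const,
      Finset.card_univ, Fintype.card_fin, Finset.sum_ite_eq' Finset.univ p,
      Finset.sum_ite_eq' Finset.univ ctr, if_pos (Finset.mem_univ p),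
      if_pos (Finset.mem_univ ctr)]
    simp only [nsmul_eq_mul]
    field_simp
    ring
/-- on the star `T(α)`, the minimum cost of a feasible demand
assignment equals `1`; since the LP relaxation without the constraints
`d(v)x(u) ≥ f(v,u)` has a feasible solution of value `1/α`, the integrality
gap of that LP on `T(α)` is at least `α`. -/
theorem star_integrality_gap (α : ℝ) (hα : 1 < α) (n : ℕ) (hn : 2 ≤ n) :
    OPT (starGraph n ⟨0, by omega⟩) (fun _ => 1)
        (fun v => if v = ⟨0, by omega⟩ then (n : ℝ) else α * n) (fun _ => 1) = 1 ∧
    sInf {r | ∃ x f, RelaxedLPFeasible (starGraph n ⟨0, by omega⟩)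
        (fun v => if v = ⟨0, by omega⟩ then (n : ℝ) else α * n) (fun _ => 1) x f ∧
        ∑ u, (1 : ℝ) * x u = r} ≤ 1 / α ∧
    α * sInf {r | ∃ x f, RelaxedLPFeasible (starGraph n ⟨0, by omega⟩)
        (fun v => if v = ⟨0, by omega⟩ then (n : ℝ) else α * n) (fun _ => 1) x f ∧
        ∑ u, (1 : ℝ) * x u = r} ≤
      OPT (starGraph n ⟨0, by omega⟩) (fun _ => 1)
        (fun v => if v = ⟨0, by omega⟩ then (n : ℝ) else α * n) (fun _ => 1) := by
  have hOPT := star_OPT α hα n hn ⟨0, by omega⟩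
  have hp : (⟨1, by omega⟩ : Fin n) ≠ ⟨0, by omega⟩ := by simp [Fin.ext_iff]
  obtain ⟨x, f, hfeas, hval⟩ := star_relaxed α hα n hn ⟨0, by omega⟩ ⟨1, by omega⟩ hp
  have hbdd : BddBelow {r | ∃ x f, RelaxedLPFeasible (starGraph n ⟨0, by omega⟩)
      (fun v => if v = ⟨0, by omega⟩ then (n : ℝ) else α * n) (fun _ => 1) x f ∧
      ∑ u, (1 : ℝ) * x u = r} := by
    refine ⟨0, fun r hr => ?_⟩
    obtain ⟨x', f', hf', hv'⟩ := hr
    rw [← hv']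
    exact Finset.sum_nonneg fun u _ => by simpa using hf'.1 u
  have hmem : (1 / α) ∈ {r | ∃ x f, RelaxedLPFeasible (starGraph n ⟨0, by omega⟩)
      (fun v => if v = ⟨0, by omega⟩ then (n : ℝ) else α * n) (fun _ => 1) x f ∧
      ∑ u, (1 : ℝ) * x u = r} := ⟨x, f, hfeas, hval⟩
  have hle := csInf_le hbdd hmem
  refine ⟨hOPT, hle, ?_⟩
  rw [hOPT]
  calc α * sInf {r | ∃ x f, RelaxedLPFeasible (starGraph n ⟨0, by omega⟩)
        (fun v => if v = ⟨0, by omega⟩ then (n : ℝ) else α * n) (fun _ => 1) x f ∧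
        ∑ u, (1 : ℝ) * x u = r}
      ≤ α * (1 / α) := mul_le_mul_of_nonneg_left hle (by linarith)
    _ = 1 := by field_simp
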